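/- Let F be a formula in unit chain expansion. Then ¬F reduces via the ¬- and ⋗-rewrite rules to recursiveReduce(F), and recursiveReduce(F) is the unique unit-chain-expansion reduct of ¬F. -/

import Mathlib

/-- Atomic symbols: literals from `A` together with ⊤ and ⊥. -/
inductive Atom (A : Type) : Type where
  | lit : A → Atom A
  | top : Atom A
  | bot : Atom A

/-- Complement on atoms, induced by a complement map `c` on literals. -/
def Atom.compl {A : Type} (c : A → A) : Atom A → Atom A
  | .lit a => .lit (c a)
  | .top => .bot
  | .bot => .top

/-- Formulas of gradual classical logic. `grad` is the connective ⋗. -/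
inductive Fm (A : Type) : Type where
  | atom : Atom A → Fm A
  | and : Fm A → Fm A → Fm A
  | or : Fm A → Fm A → Fm A
  | neg : Fm A → Fm A
  | grad : Fm A → Fm A → Fm A

/-- One-step rewriting using only the five ⋗-rules (with congruence closure). -/
inductive GStep {A : Type} : Fm A → Fm A → Prop where
  | gradAssoc (F G H) : GStep (.grad (.grad F G) H)
      (.and (.grad F H) (.or (.grad F G) (.grad F (.grad G H))))
  | gradAndL (F G H) : GStep (.grad (.and F G) H) (.and (.grad F H) (.grad G H))
  | gradOrL (F G H) : GStep (.grad (.or F G) H) (.or (.grad F H) (.grad G H))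
  | gradAndR (F G H) : GStep (.grad F (.and G H)) (.and (.grad F G) (.grad F H))
  | gradOrR (F G H) : GStep (.grad F (.or G H)) (.or (.grad F G) (.grad F H))
  | andL {F F'} (G) : GStep F F' → GStep (.and F G) (.and F' G)
  | andR (F) {G G'} : GStep G G' → GStep (.and F G) (.and F G')
  | orL {F F'} (G) : GStep F F' → GStep (.or F G) (.or F' G)
  | orR (F) {G G'} : GStep G G' → GStep (.or F G) (.or F G')
  | negC {F F'} : GStep F F' → GStep (.neg F) (.neg F')
  | gradL {F F'} (G) : GStep F F' → GStep (.grad F G) (.grad F' G)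
  | gradR (F) {G G'} : GStep G G' → GStep (.grad F G) (.grad F G')

/-- One-step rewriting with both the ¬-rules and the ⋗-rules (congruence closure). -/
inductive Step {A : Type} (c : A → A) : Fm A → Fm A → Prop where
  | negAtom (s) : Step c (.neg (.atom s)) (.atom (s.compl c))
  | negAnd (F G) : Step c (.neg (.and F G)) (.or (.neg F) (.neg G))
  | negOr (F G) : Step c (.neg (.or F G)) (.and (.neg F) (.neg G))
  | negGrad (s F) : Step c (.neg (.grad (.atom s) F))
      (.or (.atom (s.compl c)) (.grad (.atom s) (.neg F)))
  | gradAssoc (F G H) : Step c (.grad (.grad F G) H)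
      (.and (.grad F H) (.or (.grad F G) (.grad F (.grad G H))))
  | gradAndL (F G H) : Step c (.grad (.and F G) H) (.and (.grad F H) (.grad G H))
  | gradOrL (F G H) : Step c (.grad (.or F G) H) (.or (.grad F H) (.grad G H))
  | gradAndR (F G H) : Step c (.grad F (.and G H)) (.and (.grad F G) (.grad F H))
  | gradOrR (F G H) : Step c (.grad F (.or G H)) (.or (.grad F G) (.grad F H))
  | andL {F F'} (G) : Step c F F' → Step c (.and F G) (.and F' G)
  | andR (F) {G G'} : Step c G G' → Step c (.and F G) (.and F G')
  | orL {F F'} (G) : Step c F F' → Step c (.or F G) (.or F' G)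
  | orR (F) {G G'} : Step c G G' → Step c (.or F G) (.or F G')
  | negC {F F'} : Step c F F' → Step c (.neg F) (.neg F')
  | gradL {F F'} (G) : Step c F F' → Step c (.grad F G) (.grad F' G)
  | gradR (F) {G G'} : Step c G G' → Step c (.grad F G) (.grad F G')

/-- Reduction: reflexive-transitive closure of one-step rewriting (all rules). -/
def Red {A : Type} (c : A → A) : Fm A → Fm A → Prop :=
  Relation.ReflTransGen (Step c)

/-- Reduction using only the ⋗-rules. -/
def GRed {A : Type} : Fm A → Fm A → Prop :=
  Relation.ReflTransGen GStep

/-- Unit chains (possibly of length one, i.e. a single atom): s₀⋗s₁⋗⋯⋗s_k. -/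
inductive UnitTail {A : Type} : Fm A → Prop where
  | atom (s : Atom A) : UnitTail (.atom s)
  | grad (s : Atom A) {F : Fm A} : UnitTail F → UnitTail (.grad (.atom s) F)

/-- Formulas in unit chain expansion: built from atoms and unit chains via ∧ and ∨;
in particular no ¬ occurs and every ⋗ lies in a unit chain of atoms. -/
inductive UCE {A : Type} : Fm A → Prop where
  | atom (s : Atom A) : UCE (.atom s)
  | and {F G : Fm A} : UCE F → UCE G → UCE (.and F G)
  | or {F G : Fm A} : UCE F → UCE G → UCE (.or F G)
  | chain (s : Atom A) {F : Fm A} : UnitTail F → UCE (.grad (.atom s) F)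

/-- Negation-free formulas. -/
inductive NegFree {A : Type} : Fm A → Prop where
  | atom (s : Atom A) : NegFree (.atom s)
  | and {F G : Fm A} : NegFree F → NegFree G → NegFree (.and F G)
  | or {F G : Fm A} : NegFree F → NegFree G → NegFree (.or F G)
  | grad {F G : Fm A} : NegFree F → NegFree G → NegFree (.grad F G)

/-- A valuation frame: a local interpretation `I` on prefix-sequences and atoms,
subject to the conditions of gradual classical logic.  The global interpretation `J`
is determined by `I` (see `GFrame.valAux`). -/
structure GFrame (A : Type) (c : A → A) : Type where
  I : List (Atom A) → Atom A → Bool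
  I_top : ∀ ψ, I ψ .top = true
  I_bot : ∀ ψ, I ψ .bot = false
  I_compl : ∀ ψ (a : A), (I ψ (.lit a) = false ↔ I ψ (.lit (c a)) = true)
  I_sync : ∀ ψ ψ' s, ψ.length = ψ'.length → I ψ s = I ψ' s

/-- Valuation relative to a prefix ψ.  On a unit chain s₀⋗⋯⋗s_k (with prefix ε)
this computes the global interpretation J(s₀…s_k) = 1 iff every local step is 1;
∧ and ∨ are Boolean. -/
def GFrame.valAux {A : Type} {c : A → A} (M : GFrame A c) :
    List (Atom A) → Fm A → Bool
  | ψ, .atom s => M.I ψ s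
  | ψ, .and F G => M.valAux ψ F && M.valAux ψ G
  | ψ, .or F G => M.valAux ψ F || M.valAux ψ G
  | ψ, .neg F => !(M.valAux ψ F)
  | ψ, .grad (.atom s) G => M.I ψ s && M.valAux (ψ ++ [s]) G
  | _, .grad _ _ => false

/-- The valuation [M ⊨ F]. -/
def GFrame.val {A : Type} {c : A → A} (M : GFrame A c) (F : Fm A) : Bool :=
  M.valAux [] F

/-- Push `s ⋗ ·` through ∧ and ∨ (normalization step of `recursiveReduce`). -/
def gradDist {A : Type} (s : Atom A) : Fm A → Fm A
  | .and F G => .and (gradDist s F) (gradDist s G)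
  | .or F G => .or (gradDist s F) (gradDist s G)
  | F => .grad (.atom s) F

/-- `recursiveReduce`: swap ∧/∨, complement non-chain atoms, and replace a chain
with head s and tail T by s^c ∨ (s ⋗ recursiveReduce T), normalized into unit
chain expansion.  On a unit chain s₀⋗⋯⋗s_k it yields
s₀^c ∨ (s₀⋗s₁^c) ∨ ⋯ ∨ (s₀⋗⋯⋗s_{k−1}⋗s_k^c). -/
def recursiveReduce {A : Type} (c : A → A) : Fm A → Fm A
  | .atom s => .atom (s.compl c)
  | .and F G => .or (recursiveReduce c F) (recursiveReduce c G)
  | .or F G => .and (recursiveReduce c F) (recursiveReduce c G)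
  | .neg F => .neg (recursiveReduce c F)
  | .grad (.atom s) G => .or (.atom (s.compl c)) (gradDist s (recursiveReduce c G))
  | .grad F G => .grad (recursiveReduce c F) (recursiveReduce c G)

namespace Stmt9Aux

variable {A : Type} {c : A → A}

theorem unitTail_uce {F : Fm A} (h : UnitTail F) : UCE F := by
  cases h with
  | atom s => exact .atom s
  | grad s h => exact .chain s h

theorem uce_nostep : ∀ {F X : Fm A}, UCE F → Step c F X → False := by
  intro F
  induction F with
  | atom s => intro X h hs; cases hs
  | and F G ihF ihG =>
    intro X h hs
    cases h with
    | and hF hG =>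
      cases hs with
      | andL _ h' => exact ihF hF h'
      | andR _ h' => exact ihG hG h'
  | or F G ihF ihG =>
    intro X h hs
    cases h with
    | or hF hG =>
      cases hs with
      | orL _ h' => exact ihF hF h'
      | orR _ h' => exact ihG hG h'
  | neg F ih => intro X h hs; cases h
  | grad F G ihF ihG =>
    intro X h hs
    cases h with
    | chain s hT =>
      cases hs with
      | gradL _ h' => cases h'
      | gradR _ h' => exact ihG (unitTail_uce hT) h'
      | gradAndR => cases hT
      | gradOrR => cases hT

/-- Normalization function, correct on "good" formulas. -/
def N (c : A → A) : Fm A → Fm A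
  | .atom s => .atom s
  | .and F G => .and (N c F) (N c G)
  | .or F G => .or (N c F) (N c G)
  | .neg F => recursiveReduce c F
  | .grad (.atom s) G => gradDist s (N c G)
  | .grad F G => .grad F G

theorem N_unitTail {T : Fm A} (h : UnitTail T) : N c T = T := by
  induction h with
  | atom s => rfl
  | grad s h ih =>
    cases h with
    | atom s' => simp [N, gradDist]
    | grad s' h' =>
      show gradDist s (N c _) = _
      rw [ih]
      rfl

theorem N_uce {F : Fm A} (h : UCE F) : N c F = F := by
  induction h with
  | atom s => rfl
  | and hF hG ihF ihG => show Fm.and _ _ = _; rw [ihF, ihG]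
  | or hF hG ihF ihG => show Fm.or _ _ = _; rw [ihF, ihG]
  | chain s hT => exact N_unitTail (UnitTail.grad s hT)

/-- Formulas reachable from ¬F with F in UCE. -/
inductive Good : Fm A → Prop where
  | atom (s : Atom A) : Good (.atom s)
  | and {F G : Fm A} : Good F → Good G → Good (.and F G)
  | or {F G : Fm A} : Good F → Good G → Good (.or F G)
  | grad (s : Atom A) {F : Fm A} : Good F → Good (.grad (.atom s) F)
  | neg {F : Fm A} : UCE F → Good (.neg F)

theorem step_good : ∀ {F F' : Fm A}, Good F → Step c F F' →
    Good F' ∧ N c F = N c F' := by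
  intro F F' hg hs
  induction hs with
  | negAtom s => exact ⟨.atom _, rfl⟩
  | negAnd F G =>
    cases hg with
    | neg h =>
      cases h with
      | and hF hG => exact ⟨.or (.neg hF) (.neg hG), rfl⟩
  | negOr F G =>
    cases hg with
    | neg h =>
      cases h with
      | or hF hG => exact ⟨.and (.neg hF) (.neg hG), rfl⟩
  | negGrad s F =>
    cases hg with
    | neg h =>
      cases h with
      | chain s hT =>
        exact ⟨.or (.atom _) (.grad s (.neg (unitTail_uce hT))), rfl⟩
  | gradAssoc F G H => cases hg
  | gradAndL F G H => cases hg
  | gradOrL F G H => cases hg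
  | gradAndR F G H =>
    cases hg with
    | grad s h =>
      cases h with
      | and hG hH => exact ⟨.and (.grad s hG) (.grad s hH), rfl⟩
  | gradOrR F G H =>
    cases hg with
    | grad s h =>
      cases h with
      | or hG hH => exact ⟨.or (.grad s hG) (.grad s hH), rfl⟩
  | andL G h ih =>
    cases hg with
    | and hF hG =>
      obtain ⟨h1, h2⟩ := ih hF
      exact ⟨.and h1 hG, by show Fm.and _ _ = Fm.and _ _; rw [h2]⟩
  | andR F h ih =>
    cases hg with
    | and hF hG =>
      obtain ⟨h1, h2⟩ := ih hG
      exact ⟨.and hF h1, by show Fm.and _ _ = Fm.and _ _; rw [h2]⟩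
  | orL G h ih =>
    cases hg with
    | or hF hG =>
      obtain ⟨h1, h2⟩ := ih hF
      exact ⟨.or h1 hG, by show Fm.or _ _ = Fm.or _ _; rw [h2]⟩
  | orR F h ih =>
    cases hg with
    | or hF hG =>
      obtain ⟨h1, h2⟩ := ih hG
      exact ⟨.or hF h1, by show Fm.or _ _ = Fm.or _ _; rw [h2]⟩
  | negC h ih =>
    cases hg with
    | neg hF => exact absurd h (fun h' => uce_nostep hF h')
  | gradL G h ih =>
    cases hg with
    | grad s hF => cases h
  | gradR F h ih =>
    cases hg with
    | grad s hG =>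
      obtain ⟨h1, h2⟩ := ih hG
      exact ⟨.grad s h1, by show gradDist s (N c _) = gradDist s (N c _); rw [h2]⟩

theorem red_good {F G : Fm A} (hg : Good F) (h : Red c F G) :
    Good G ∧ N c F = N c G := by
  induction h with
  | refl => exact ⟨hg, rfl⟩
  | tail _ hs ih =>
    obtain ⟨h1, h2⟩ := ih
    obtain ⟨h3, h4⟩ := step_good h1 hs
    exact ⟨h3, h2.trans h4⟩

theorem red_andCongr {F F' G G' : Fm A} (hF : Red c F F') (hG : Red c G G') :
    Red c (.and F G) (.and F' G') :=
  Relation.ReflTransGen.trans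
    (Relation.ReflTransGen.lift (fun X => Fm.and X G) (fun _ _ => Step.andL G) _ _ hF)
    (Relation.ReflTransGen.lift (fun X => Fm.and F' X) (fun _ _ => Step.andR F') _ _ hG)

theorem red_orCongr {F F' G G' : Fm A} (hF : Red c F F') (hG : Red c G G') :
    Red c (.or F G) (.or F' G') :=
  Relation.ReflTransGen.trans
    (Relation.ReflTransGen.lift (fun X => Fm.or X G) (fun _ _ => Step.orL G) _ _ hF)
    (Relation.ReflTransGen.lift (fun X => Fm.or F' X) (fun _ _ => Step.orR F') _ _ hG)

theorem red_gradR {s : Atom A} {G G' : Fm A} (hG : Red c G G') :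
    Red c (.grad (.atom s) G) (.grad (.atom s) G') :=
  Relation.ReflTransGen.lift (fun X => Fm.grad (.atom s) X)
    (fun _ _ => Step.gradR (.atom s)) _ _ hG

theorem red_gradDist (s : Atom A) : ∀ X : Fm A, Red c (.grad (.atom s) X) (gradDist s X)
  | .and F G =>
    Relation.ReflTransGen.head (Step.gradAndR _ _ _)
      (red_andCongr (red_gradDist s F) (red_gradDist s G))
  | .or F G =>
    Relation.ReflTransGen.head (Step.gradOrR _ _ _)
      (red_orCongr (red_gradDist s F) (red_gradDist s G))
  | .atom s' => Relation.ReflTransGen.refl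
  | .neg F => Relation.ReflTransGen.refl
  | .grad F G => Relation.ReflTransGen.refl

theorem red_neg_unitTail {T : Fm A} (h : UnitTail T) :
    Red c (.neg T) (recursiveReduce c T) := by
  induction h with
  | atom s => exact Relation.ReflTransGen.single (.negAtom s)
  | grad s hT ih =>
    refine Relation.ReflTransGen.head (.negGrad s _) ?_
    exact red_orCongr Relation.ReflTransGen.refl
      (Relation.ReflTransGen.trans (red_gradR ih) (red_gradDist s _))

theorem red_neg_uce {F : Fm A} (h : UCE F) :
    Red c (.neg F) (recursiveReduce c F) := by
  induction h with
  | atom s => exact Relation.ReflTransGen.single (.negAtom s)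
  | and hF hG ihF ihG =>
    exact Relation.ReflTransGen.head (.negAnd _ _) (red_orCongr ihF ihG)
  | or hF hG ihF ihG =>
    exact Relation.ReflTransGen.head (.negOr _ _) (red_andCongr ihF ihG)
  | chain s hT => exact red_neg_unitTail (UnitTail.grad s hT)

end Stmt9Aux

/-- for F in unit chain expansion, ¬F reduces to recursiveReduce(F),
and recursiveReduce(F) is the unique unit-chain-expansion reduct of ¬F. -/
theorem stmt9 {A : Type} (c : A → A) (hc : Function.Involutive c)
    {F : Fm A} (h : UCE F) :
    Red c (Fm.neg F) (recursiveReduce c F) ∧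
    (∀ G : Fm A, Red c (Fm.neg F) G → UCE G → G = recursiveReduce c F) := by
  refine ⟨Stmt9Aux.red_neg_uce h, fun G hred hG => ?_⟩
  have h2 := (Stmt9Aux.red_good (Stmt9Aux.Good.neg h) hred).2
  rw [Stmt9Aux.N_uce hG] at h2
  exact h2.symm
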